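/- The osculating interpolation polynomial g(x) = ∑_{i=1}^r [∑_{k=0}^{m_i-1} (1/k!)·f^{(k)}(x_i)·q_i(x)^k]·s_i(x) reduced mod h(x) satisfies g^{(j)}(x_i) = f^{(j)}(x_i) for all i and all 0 ≤ j ≤ m_i - 1. -/

import Mathlib

open Polynomial

private lemma aux_deriv_dvd (a : ℝ) (n : ℕ) (p : Polynomial ℝ)
    (hp : (X - C a) ^ n ∣ p) : (X - C a) ^ (n - 1) ∣ derivative p := by
  obtain ⟨c, rfl⟩ := hp
  rw [derivative_mul, derivative_pow]
  apply dvd_add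
  · simp only [derivative_sub, derivative_X, derivative_C, sub_zero, mul_one]
    exact ((dvd_mul_left _ _).mul_right _)
  · exact Dvd.dvd.mul_right (pow_dvd_pow _ (Nat.sub_le n 1)) _

private lemma aux_iter_deriv_dvd (a : ℝ) (n j : ℕ) (p : Polynomial ℝ)
    (hp : (X - C a) ^ n ∣ p) : (X - C a) ^ (n - j) ∣ derivative^[j] p := by
  induction j with
  | zero => simpa using hp
  | succ k ih =>
      rw [Function.iterate_succ_apply']
      have := aux_deriv_dvd a (n - k) _ ih
      rwa [Nat.sub_sub] at this

private lemma aux_taylor_pow (a : ℝ) (p : Polynomial ℝ) (n : ℕ) :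
    taylor a (p ^ n) = (taylor a p) ^ n := by
  induction n with
  | zero => simp [taylor_one]
  | succ k ih => rw [pow_succ, pow_succ, taylor_mul, ih]

theorem stmt10
    (r : ℕ) (hr : 0 < r) (x : Fin r → ℝ) (hx : Function.Injective x)
    (m : Fin r → ℕ) (hm : ∀ i, 1 ≤ m i)
    (h : Polynomial ℝ) (hh : h = ∏ i, (X - C (x i)) ^ m i)
    (hi : Fin r → Polynomial ℝ)
    (hhi : ∀ i, hi i = ∏ j ∈ Finset.univ.erase i, (X - C (x j)) ^ m j)
    (u : Fin r → Polynomial ℝ)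
    (hu : ∀ i, (X - C (x i)) ^ m i ∣ u i * hi i - 1)
    (s : Fin r → Polynomial ℝ) (hs : ∀ i, s i = u i * hi i)
    (q : Fin r → Polynomial ℝ) (hq : ∀ i, h ∣ q i - (X - C (x i)) * s i)
    (f : Polynomial ℝ) (g : Polynomial ℝ)
    (hg : g = (∑ i, (∑ k ∈ Finset.range (m i),
        C ((Polynomial.derivative^[k] f).eval (x i) / k.factorial) * (q i) ^ k) * s i) %ₘ h)
    : ∀ i, ∀ j ≤ m i - 1,
      (Polynomial.derivative^[j] g).eval (x i) = (Polynomial.derivative^[j] f).eval (x i) := by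
  intro i j hj
  set a := x i with ha
  set n := m i with hn
  set P : Polynomial ℝ := (X - C a) ^ n with hP
  set G : Polynomial ℝ := ∑ i, (∑ k ∈ Finset.range (m i),
      C ((Polynomial.derivative^[k] f).eval (x i) / k.factorial) * (q i) ^ k) * s i with hG
  -- h is monic
  have hmon : h.Monic := by
    rw [hh]; exact monic_prod_of_monic _ _ fun j _ => (monic_X_sub_C (x j)).pow _
  have hPh : P ∣ h := by
    rw [hh, hP]; exact Finset.dvd_prod_of_mem _ (Finset.mem_univ i)
  -- P ∣ g - G
  have h1 : P ∣ g - G := by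
    refine hPh.trans ?_
    rw [hg, modByMonic_eq_sub_mul_div _ h]
    exact ⟨-(G /ₘ h), by ring⟩
  -- P ∣ s i - 1
  have hs1 : P ∣ s i - 1 := by rw [hs]; exact hu i
  -- P ∣ q i - (X - C a)
  have hq1 : P ∣ q i - (X - C a) := by
    have h2 : P ∣ q i - (X - C a) * s i := hPh.trans (hq i)
    have h3 : P ∣ (X - C a) * s i - (X - C a) := by
      have : (X - C a) * s i - (X - C a) = (X - C a) * (s i - 1) := by ring
      rw [this]; exact Dvd.dvd.mul_left hs1 _
    have := dvd_add h2 h3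
    simpa using this
  -- abbreviation: T' := Taylor truncation
  set T' : Polynomial ℝ := ∑ k ∈ Finset.range n,
      C ((Polynomial.derivative^[k] f).eval a / k.factorial) * (X - C a) ^ k with hT'
  set Ti : Polynomial ℝ := ∑ k ∈ Finset.range n,
      C ((Polynomial.derivative^[k] f).eval a / k.factorial) * (q i) ^ k with hTi
  -- P ∣ Ti - T'
  have hTT : P ∣ Ti - T' := by
    rw [hTi, hT', ← Finset.sum_sub_distrib]
    refine Finset.dvd_sum fun k _ => ?_
    have : C ((Polynomial.derivative^[k] f).eval a / k.factorial) * (q i) ^ k -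
        C ((Polynomial.derivative^[k] f).eval a / k.factorial) * (X - C a) ^ k =
        C ((Polynomial.derivative^[k] f).eval a / k.factorial) * ((q i) ^ k - (X - C a) ^ k) := by
      ring
    rw [this]
    exact ((hq1.trans (sub_dvd_pow_sub_pow _ _ k)).mul_left _)
  -- P ∣ T' - f  via taylor
  have hTf : P ∣ T' - f := by
    have hcoeff : ∀ k < n, (taylor a (T' - f)).coeff k = 0 := by
      intro k hk
      have hT'c : (taylor a T').coeff k =
          (Polynomial.derivative^[k] f).eval a / k.factorial := by
        rw [hT', map_sum]
        have : ∀ l ∈ Finset.range n, taylor a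
            (C ((Polynomial.derivative^[l] f).eval a / l.factorial) * (X - C a) ^ l) =
            C ((Polynomial.derivative^[l] f).eval a / l.factorial) * X ^ l := by
          intro l _
          rw [taylor_mul, taylor_C, aux_taylor_pow]
          congr 2
          rw [map_sub, taylor_X, taylor_C]; ring
        rw [Finset.sum_congr rfl this, finset_sum_coeff]
        simp only [coeff_C_mul, coeff_X_pow]
        rw [Finset.sum_eq_single k]
        · simp
        · intro b _ hb; simp [Ne.symm hb]
        · intro hk'; exact absurd (Finset.mem_range.mpr hk) hk'
      have hfc : (taylor a f).coeff k =
          (Polynomial.derivative^[k] f).eval a / k.factorial := by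
        rw [taylor_coeff]
        have := congrFun (Polynomial.factorial_smul_hasseDeriv (R := ℝ) (k := k)) f
        simp only [LinearMap.smul_apply] at this
        have heval := congrArg (Polynomial.eval a) this
        rw [eval_smul, nsmul_eq_mul] at heval
        field_simp
        rw [mul_comm]
        exact heval
      rw [map_sub, coeff_sub, hT'c, hfc, sub_self]
    have hXdvd : X ^ n ∣ taylor a (T' - f) := by
      rw [X_pow_dvd_iff]; exact hcoeff
    obtain ⟨c, hc⟩ := hXdvd
    have : T' - f = taylor (-a) (taylor a (T' - f)) := by
      rw [taylor_taylor]; simp [taylor_zero]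
    rw [this, hc, taylor_mul, aux_taylor_pow, taylor_X]
    have : X + C (-a) = X - C a := by simp [sub_eq_add_neg, map_neg]
    rw [this]
    exact Dvd.dvd.mul_right (dvd_refl _) _
  -- P ∣ G - f
  have h2 : P ∣ G - f := by
    have hsplit : G = Ti * s i + ∑ j ∈ Finset.univ.erase i, (∑ k ∈ Finset.range (m j),
        C ((Polynomial.derivative^[k] f).eval (x j) / k.factorial) * (q j) ^ k) * s j := by
      rw [hG, ← Finset.add_sum_erase _ _ (Finset.mem_univ i)]
    have hrest : P ∣ ∑ j ∈ Finset.univ.erase i, (∑ k ∈ Finset.range (m j),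
        C ((Polynomial.derivative^[k] f).eval (x j) / k.factorial) * (q j) ^ k) * s j := by
      refine Finset.dvd_sum fun j hj' => ?_
      have hji : i ≠ j := fun e => (Finset.mem_erase.mp hj').1 e.symm
      have : P ∣ hi j := by
        rw [hhi j, hP]
        exact Finset.dvd_prod_of_mem _ (Finset.mem_erase.mpr ⟨hji, Finset.mem_univ i⟩)
      rw [hs j]
      exact (this.mul_left _).mul_left _
    have key : G - f = Ti * (s i - 1) + (Ti - T') + (T' - f) + (∑ j ∈ Finset.univ.erase i,
        (∑ k ∈ Finset.range (m j),
        C ((Polynomial.derivative^[k] f).eval (x j) / k.factorial) * (q j) ^ k) * s j) := by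
      rw [hsplit]; ring
    rw [key]
    exact dvd_add (dvd_add (dvd_add (hs1.mul_left _) hTT) hTf) hrest
  -- combine
  have hgf : P ∣ g - f := by
    have := dvd_add h1 h2
    simpa using this
  have hd := aux_iter_deriv_dvd a n j _ hgf
  have hmi : 1 ≤ n := hm i
  have hnj : 1 ≤ n - j := by omega
  have hdvd1 : (X - C a) ∣ derivative^[j] (g - f) := by
    calc (X - C a) = (X - C a) ^ 1 := (pow_one _).symm
    _ ∣ (X - C a) ^ (n - j) := pow_dvd_pow _ hnj
    _ ∣ _ := hd
  have heval : (derivative^[j] (g - f)).eval a = 0 := by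
    obtain ⟨c, hc⟩ := hdvd1
    rw [hc]; simp
  rw [iterate_derivative_sub, eval_sub, sub_eq_zero] at heval
  exact heval
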